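/- For any y ∈ ℝ^n, p(y) = min_g max_i φ_i(y,g) equals max_{λ ∈ Δ_m} [ Σ_i λ_i ( f_i + ⟨g_i, y − z_i⟩ + (1/(2L))‖g_i‖² ) − (1/(2L))‖Σ_i λ_i g_i‖² ], with the inner minimizer given by g* = Σ_i λ*_i g_i for any optimal λ*. -/

import Mathlib

open RealInnerProductSpace

section aux
variable {E : Type*} [NormedAddCommGroup E] [InnerProductSpace ℝ E] {m : ℕ}

noncomputable def Dval (a : Fin m → ℝ) (c : ℝ) (v : Fin m → E) (lam : Fin m → ℝ) : ℝ :=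
  (∑ i, lam i * (a i + c * ‖v i‖^2)) - c * ‖∑ i, lam i • v i‖^2

lemma keyA (a : Fin m → ℝ) (c : ℝ) (v : Fin m → E) {lam : Fin m → ℝ}
    (hsum : ∑ i, lam i = 1) (g : E) :
    ∑ i, lam i * (a i + c * ‖g - v i‖^2)
      = Dval a c v lam + c * ‖g - ∑ i, lam i • v i‖^2 := by
  have hip : ⟪g, ∑ i, lam i • v i⟫ = ∑ i, lam i * ⟪g, v i⟫ := by
    rw [inner_sum]
    exact Finset.sum_congr rfl fun i _ => real_inner_smul_right _ _ _
  have hL : ∑ i, lam i * (a i + c * ‖g - v i‖^2)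
      = (∑ i, lam i * a i) + c * ‖g‖^2 * (∑ i, lam i)
        - 2 * c * (∑ i, lam i * ⟪g, v i⟫) + c * (∑ i, lam i * ‖v i‖^2) := by
    simp only [Finset.mul_sum]
    rw [← Finset.sum_add_distrib, ← Finset.sum_sub_distrib, ← Finset.sum_add_distrib]
    exact Finset.sum_congr rfl fun i _ => by rw [norm_sub_sq_real]; ring
  have hR2 : ∑ i, lam i * (a i + c * ‖v i‖^2)
      = (∑ i, lam i * a i) + c * (∑ i, lam i * ‖v i‖^2) := by
    simp only [Finset.mul_sum]
    rw [← Finset.sum_add_distrib]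
    exact Finset.sum_congr rfl fun i _ => by ring
  rw [hL, hsum, Dval, hR2, norm_sub_sq_real g (∑ i, lam i • v i), hip]
  ring

lemma keyB [Nonempty (Fin m)] (a : Fin m → ℝ) {c : ℝ} (hc : 0 ≤ c) (v : Fin m → E)
    {lam : Fin m → ℝ} (hlam : lam ∈ stdSimplex ℝ (Fin m)) (g : E) :
    Dval a c v lam ≤ ⨆ i, (a i + c * ‖g - v i‖^2) := by
  obtain ⟨hpos, hsum⟩ := hlam
  have h1 : Dval a c v lam ≤ ∑ i, lam i * (a i + c * ‖g - v i‖^2) := by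
    rw [keyA a c v hsum g]
    have : 0 ≤ c * ‖g - ∑ i, lam i • v i‖^2 := by positivity
    linarith
  refine h1.trans ?_
  have h2 : ∑ i, lam i * (a i + c * ‖g - v i‖^2)
      ≤ ∑ i, lam i * (⨆ j, (a j + c * ‖g - v j‖^2)) := by
    refine Finset.sum_le_sum fun i _ => mul_le_mul_of_nonneg_left ?_ (hpos i)
    exact le_ciSup (Finite.bddAbove_range fun j => a j + c * ‖g - v j‖^2) i
  rw [← Finset.sum_mul, hsum, one_mul] at h2
  exact h2

lemma keyC (a : Fin m → ℝ) {c : ℝ} (hc : 0 < c) (v : Fin m → E)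
    {lam : Fin m → ℝ} (hlam : lam ∈ stdSimplex ℝ (Fin m))
    (hopt : ∀ mu ∈ stdSimplex ℝ (Fin m), Dval a c v mu ≤ Dval a c v lam) (i : Fin m) :
    a i + c * ‖(∑ j, lam j • v j) - v i‖^2 ≤ Dval a c v lam := by
  obtain ⟨hpos, hsum⟩ := hlam
  set gb : E := ∑ j, lam j • v j with hgb
  have key : ∀ t : ℝ, 0 < t → t ≤ 1 →
      a i + c * ‖gb - v i‖^2 ≤ Dval a c v lam + c * ‖v i - gb‖^2 * t := by
    intro t ht ht1
    set mu : Fin m → ℝ := fun j => (1-t) * lam j + t * (if j = i then 1 else 0) with hmu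
    have hmem : mu ∈ stdSimplex ℝ (Fin m) := by
      constructor
      · intro j
        have h1 : 0 ≤ (1-t) * lam j := mul_nonneg (by linarith) (hpos j)
        have h2 : 0 ≤ t * (if j = i then (1:ℝ) else 0) := by
          apply mul_nonneg ht.le; split <;> norm_num
        simpa [hmu] using add_nonneg h1 h2
      · simp only [hmu]
        rw [Finset.sum_add_distrib, ← Finset.mul_sum, ← Finset.mul_sum, hsum]
        rw [show (∑ j, if j = i then (1:ℝ) else 0) = 1 by
          rw [Finset.sum_ite_eq' Finset.univ i (fun _ => (1:ℝ))]; simp]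
        ring
    have h := hopt mu hmem
    -- expand the two pieces of Dval a c v mu
    have hvec : ∑ j, mu j • v j = gb + t • (v i - gb) := by
      have h1 : ∀ j, mu j • v j = (1-t) • (lam j • v j)
          + (if j = i then t • v j else 0) := by
        intro j
        simp only [hmu]
        split <;> simp [add_smul, smul_smul]
      rw [Finset.sum_congr rfl fun j _ => h1 j, Finset.sum_add_distrib,
        ← Finset.smul_sum, Finset.sum_ite_eq' Finset.univ i (fun j => t • v j)]
      simp only [Finset.mem_univ, if_true, ← hgb]
      module
    have hlin : ∑ j, mu j * (a j + c * ‖v j‖^2)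
        = (1-t) * (∑ j, lam j * (a j + c * ‖v j‖^2)) + t * (a i + c * ‖v i‖^2) := by
      have h1 : ∀ j, mu j * (a j + c * ‖v j‖^2)
          = (1-t) * (lam j * (a j + c * ‖v j‖^2))
            + (if j = i then t * (a j + c * ‖v j‖^2) else 0) := by
        intro j; simp only [hmu]; split <;> ring
      rw [Finset.sum_congr rfl fun j _ => h1 j, Finset.sum_add_distrib,
        ← Finset.mul_sum, Finset.sum_ite_eq' Finset.univ i]
      simp
    rw [Dval, Dval, hvec, hlin, norm_add_sq_real, real_inner_smul_right] at h
    have hns : ‖t • (v i - gb)‖^2 = t^2 * ‖v i - gb‖^2 := by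
      rw [norm_smul, Real.norm_eq_abs, mul_pow, sq_abs]
    rw [hns] at h
    have hib : ⟪gb, v i - gb⟫ = ⟪gb, v i⟫ - ‖gb‖^2 := by
      rw [inner_sub_right, real_inner_self_eq_norm_sq]
    have hn1 : ‖gb - v i‖^2 = ‖gb‖^2 - 2 * ⟪gb, v i⟫ + ‖v i‖^2 := norm_sub_sq_real _ _
    have hn2 : ‖v i - gb‖^2 = ‖v i‖^2 - 2 * ⟪gb, v i⟫ + ‖gb‖^2 := by
      rw [norm_sub_sq_real, real_inner_comm]
    rw [hib] at h
    rw [Dval, hn1, hn2, ← hgb]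
    rw [hn2] at h
    set X := ‖gb‖^2
    set Y := ‖(v i : E)‖^2
    set P := ⟪gb, v i⟫
    set S := ∑ j, lam j * (a j + c * ‖v j‖^2)
    -- h : (1-t)*S + t*(a i + c*Y) - c*(X + 2*(t*(P - X)) + t^2*(Y - 2*P + X)) ≤ S - c*X
    -- goal : a i + c*(X - 2*P + Y) ≤ S - c*X + c*(Y - 2*P + X)*t
    have hD : t * ((a i + c*(X - 2*P + Y)) - (S - c*X + c*(Y - 2*P + X)*t)) ≤ 0 := by
      nlinarith [h]
    nlinarith [hD, ht]
  -- limit argument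
  apply le_of_forall_pos_le_add
  intro ε hε
  have hK : (0:ℝ) < c * ‖v i - gb‖^2 + 1 := by positivity
  set t : ℝ := min 1 (ε / (c * ‖v i - gb‖^2 + 1)) with htdef
  have ht0 : 0 < t := lt_min one_pos (div_pos hε hK)
  have ht1 : t ≤ 1 := min_le_left _ _
  have h := key t ht0 ht1
  have hbound : c * ‖v i - gb‖^2 * t ≤ ε := by
    have h2 : t ≤ ε / (c * ‖v i - gb‖^2 + 1) := min_le_right _ _
    have h3 : c * ‖v i - gb‖^2 * t ≤ c * ‖v i - gb‖^2 * (ε / (c * ‖v i - gb‖^2 + 1)) :=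
      mul_le_mul_of_nonneg_left h2 (by positivity)
    have h4 : c * ‖v i - gb‖^2 * (ε / (c * ‖v i - gb‖^2 + 1)) ≤ ε := by
      rw [mul_div_assoc']
      rw [div_le_iff₀ hK]
      nlinarith [hε, sq_nonneg ‖v i - gb‖, hc.le]
    linarith
  linarith
end aux


theorem stmt5 (n m : ℕ) (hm : 0 < m)
    (z : Fin m → EuclideanSpace ℝ (Fin n)) (fv : Fin m → ℝ)
    (gv : Fin m → EuclideanSpace ℝ (Fin n)) (L : ℝ) (hL : 0 < L)
    (y : EuclideanSpace ℝ (Fin n)) :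
    ((⨅ g : EuclideanSpace ℝ (Fin n), ⨆ i : Fin m,
        (fv i + ⟪gv i, y - z i⟫ + (1/(2*L)) * ‖g - gv i‖^2))
      = ⨆ lam : {l : Fin m → ℝ // l ∈ stdSimplex ℝ (Fin m)},
          ((∑ i, lam.1 i * (fv i + ⟪gv i, y - z i⟫ + (1/(2*L)) * ‖gv i‖^2))
            - (1/(2*L)) * ‖∑ i, lam.1 i • gv i‖^2)) ∧
    (∀ lamstar ∈ stdSimplex ℝ (Fin m),
      (∀ mu ∈ stdSimplex ℝ (Fin m),
          ((∑ i, mu i * (fv i + ⟪gv i, y - z i⟫ + (1/(2*L)) * ‖gv i‖^2))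
              - (1/(2*L)) * ‖∑ i, mu i • gv i‖^2)
            ≤ ((∑ i, lamstar i * (fv i + ⟪gv i, y - z i⟫ + (1/(2*L)) * ‖gv i‖^2))
              - (1/(2*L)) * ‖∑ i, lamstar i • gv i‖^2)) →
      (⨆ i : Fin m, (fv i + ⟪gv i, y - z i⟫
            + (1/(2*L)) * ‖(∑ j, lamstar j • gv j) - gv i‖^2))
        = ⨅ g : EuclideanSpace ℝ (Fin n), ⨆ i : Fin m,
            (fv i + ⟪gv i, y - z i⟫ + (1/(2*L)) * ‖g - gv i‖^2)) := by
  haveI : Nonempty (Fin m) := Fin.pos_iff_nonempty.mp hm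
  set c : ℝ := 1/(2*L) with hcdef
  have hc : 0 < c := by positivity
  set a : Fin m → ℝ := fun i => fv i + ⟪gv i, y - z i⟫ with ha
  -- abbreviations
  set F : EuclideanSpace ℝ (Fin n) → ℝ :=
    fun g => ⨆ i : Fin m, (a i + c * ‖g - gv i‖^2) with hF
  -- the second part as a general claim
  have main : ∀ lamstar ∈ stdSimplex ℝ (Fin m),
      (∀ mu ∈ stdSimplex ℝ (Fin m), Dval a c gv mu ≤ Dval a c gv lamstar) →
      (F (∑ j, lamstar j • gv j) = Dval a c gv lamstar ∧
        (⨅ g, F g) = Dval a c gv lamstar) := by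
    intro lam hlam hopt
    set gb : EuclideanSpace ℝ (Fin n) := ∑ j, lam j • gv j with hgb
    have h1 : F gb ≤ Dval a c gv lam :=
      ciSup_le (keyC a hc gv hlam hopt)
    have h2 : Dval a c gv lam ≤ F gb := keyB a hc.le gv hlam gb
    have hbddB : BddBelow (Set.range F) := by
      refine ⟨Dval a c gv lam, ?_⟩
      rintro x ⟨g, rfl⟩
      exact keyB a hc.le gv hlam g
    have h3 : (⨅ g, F g) ≤ F gb := ciInf_le hbddB gb
    have h4 : Dval a c gv lam ≤ ⨅ g, F g :=
      le_ciInf fun g => keyB a hc.le gv hlam g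
    exact ⟨le_antisymm h1 h2, le_antisymm (by linarith) (by linarith)⟩
  -- existence of optimal lamstar
  have hcont : Continuous fun lam : Fin m → ℝ => Dval a c gv lam := by
    apply Continuous.sub
    · exact continuous_finset_sum _ fun i _ => (continuous_apply i).mul continuous_const
    · exact continuous_const.mul
        ((continuous_finset_sum _ fun i _ =>
          (continuous_apply i).smul continuous_const).norm.pow 2)
  have hne : (stdSimplex ℝ (Fin m)).Nonempty := by
    refine ⟨fun j => if j = (⟨0, hm⟩ : Fin m) then 1 else 0, fun j => by dsimp only; split <;> norm_num, ?_⟩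
    rw [Finset.sum_ite_eq' Finset.univ _ (fun _ => (1:ℝ))]; simp
  obtain ⟨ls, hlsmem, hlsmax⟩ :=
    (isCompact_stdSimplex ℝ (Fin m)).exists_isMaxOn hne hcont.continuousOn
  have hopt : ∀ mu ∈ stdSimplex ℝ (Fin m), Dval a c gv mu ≤ Dval a c gv ls :=
    fun mu hmu => hlsmax hmu
  obtain ⟨_, hinf⟩ := main ls hlsmem hopt
  haveI : Nonempty {l : Fin m → ℝ // l ∈ stdSimplex ℝ (Fin m)} := ⟨⟨ls, hlsmem⟩⟩
  constructor
  · -- first part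
    rw [show (⨅ g : EuclideanSpace ℝ (Fin n), ⨆ i : Fin m,
        (fv i + ⟪gv i, y - z i⟫ + (1/(2*L)) * ‖g - gv i‖^2)) = ⨅ g, F g from rfl, hinf]
    refine le_antisymm ?_ ?_
    · exact le_ciSup (f := fun lam : {l : Fin m → ℝ // l ∈ stdSimplex ℝ (Fin m)} =>
        Dval a c gv lam.1) ⟨Dval a c gv ls, by rintro x ⟨⟨mu, hmu⟩, rfl⟩; exact hopt mu hmu⟩
        ⟨ls, hlsmem⟩
    · exact ciSup_le fun ⟨mu, hmu⟩ => hopt mu hmu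
  · intro lamstar hmem hopt'
    obtain ⟨h1, h2⟩ := main lamstar hmem hopt'
    exact h1.trans h2.symm
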